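/- Let 0 < q < 1, λ > 0, and p > 1. For every sequence (a_n)_{n≥0} of nonnegative reals, ∑_{n=0}^∞ (q^{λn} ∑_{k=0}^{n} q^{-λk} a_k)^p ≤ (1-q^λ)^{-p} ∑_{n=0}^∞ a_n^p. -/

import Mathlib

open scoped ENNReal

/-- Jensen-type inequality for weighted finite sums in `ℝ≥0∞`. -/
lemma jensen_finset {ι : Type*} (s : Finset ι) (w b : ι → ℝ≥0∞) {p : ℝ} (hp : 1 ≤ p)
    (hW0 : (∑ i ∈ s, w i) ≠ 0) (hWt : (∑ i ∈ s, w i) ≠ ∞) :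
    (∑ i ∈ s, w i * b i) ^ p ≤ (∑ i ∈ s, w i) ^ (p - 1) * ∑ i ∈ s, w i * b i ^ p := by
  set W := ∑ i ∈ s, w i with hW
  have hw1 : ∑ i ∈ s, w i / W = 1 := by
    simp only [div_eq_mul_inv, ← Finset.sum_mul]
    exact ENNReal.mul_inv_cancel hW0 hWt
  have key := ENNReal.rpow_arith_mean_le_arith_mean_rpow s (fun i => w i / W) b hw1 hp
  have hsum : ∑ i ∈ s, w i / W * b i = (∑ i ∈ s, w i * b i) / W := by
    calc ∑ i ∈ s, w i / W * b i = ∑ i ∈ s, w i * b i * W⁻¹ :=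
          Finset.sum_congr rfl fun i _ => by rw [div_eq_mul_inv]; ring
      _ = (∑ i ∈ s, w i * b i) * W⁻¹ := by rw [Finset.sum_mul]
      _ = (∑ i ∈ s, w i * b i) / W := by rw [div_eq_mul_inv]
  have hsum' : ∑ i ∈ s, w i / W * b i ^ p = (∑ i ∈ s, w i * b i ^ p) / W := by
    calc ∑ i ∈ s, w i / W * b i ^ p = ∑ i ∈ s, w i * b i ^ p * W⁻¹ :=
          Finset.sum_congr rfl fun i _ => by rw [div_eq_mul_inv]; ring
      _ = (∑ i ∈ s, w i * b i ^ p) * W⁻¹ := by rw [Finset.sum_mul]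
      _ = (∑ i ∈ s, w i * b i ^ p) / W := by rw [div_eq_mul_inv]
  rw [hsum, hsum'] at key
  have hmul : (∑ i ∈ s, w i * b i) = W * ((∑ i ∈ s, w i * b i) / W) := by
    rw [ENNReal.mul_div_cancel hW0 hWt]
  calc (∑ i ∈ s, w i * b i) ^ p
      = (W * ((∑ i ∈ s, w i * b i) / W)) ^ p := by rw [← hmul]
    _ = W ^ p * ((∑ i ∈ s, w i * b i) / W) ^ p := by
        rw [ENNReal.mul_rpow_of_nonneg _ _ (by linarith)]
    _ ≤ W ^ p * ((∑ i ∈ s, w i * b i ^ p) / W) := by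
        exact mul_le_mul_right key _
    _ = W ^ (p - 1) * ∑ i ∈ s, w i * b i ^ p := by
        rw [div_eq_mul_inv, show p - 1 = p + (-1) by ring,
          ENNReal.rpow_add _ _ hW0 hWt, ENNReal.rpow_neg_one]
        ring

theorem hardy_N (q l p : ℝ) (hq : 0 < q) (hq1 : q < 1) (hl : 0 < l)
    (hp : 1 < p) (a : ℕ → ℝ≥0∞) :
    ∑' n : ℕ, ((ENNReal.ofReal q) ^ (l * (n : ℝ)) *
        ∑ k ∈ Finset.range (n + 1), (ENNReal.ofReal q) ^ (-(l * (k : ℝ))) * a k) ^ p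
      ≤ ENNReal.ofReal ((1 - q ^ l) ^ (-p)) * ∑' n : ℕ, (a n) ^ p := by
  have hql_pos : (0 : ℝ) < q ^ l := Real.rpow_pos_of_pos hq l
  have hql_lt : q ^ l < 1 := Real.rpow_lt_one hq.le hq1 hl
  set Q : ℝ≥0∞ := ENNReal.ofReal (q ^ l) with hQdef
  have hQ0 : Q ≠ 0 := by
    simp [hQdef, ENNReal.ofReal_eq_zero, not_le, hql_pos]
  have hQt : Q ≠ ∞ := ENNReal.ofReal_ne_top
  have hQlt1 : Q < 1 := by
    rw [hQdef, ← ENNReal.ofReal_one]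
    exact (ENNReal.ofReal_lt_ofReal_iff one_pos).mpr hql_lt
  have hsub : (1 : ℝ≥0∞) - Q = ENNReal.ofReal (1 - q ^ l) := by
    rw [ENNReal.ofReal_sub _ hql_pos.le, ENNReal.ofReal_one]
  have hsub0 : (1 : ℝ≥0∞) - Q ≠ 0 := by
    rw [hsub]
    simp [ENNReal.ofReal_eq_zero, not_le]
    linarith
  set C : ℝ≥0∞ := (1 - Q)⁻¹ with hCdef
  have hC0 : C ≠ 0 := by
    rw [hCdef, ne_eq, ENNReal.inv_eq_zero]
    exact (tsub_le_self.trans_lt ENNReal.one_lt_top).ne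
  have hCt : C ≠ ∞ := by
    simpa [hCdef, ENNReal.inv_eq_top] using hsub0
  -- rewrite each term of LHS
  have hterm : ∀ n : ℕ, (ENNReal.ofReal q) ^ (l * (n : ℝ)) *
      ∑ k ∈ Finset.range (n + 1), (ENNReal.ofReal q) ^ (-(l * (k : ℝ))) * a k
      = ∑ k ∈ Finset.range (n + 1), Q ^ (n - k) * a k := by
    intro n
    rw [Finset.mul_sum]
    refine Finset.sum_congr rfl fun k hk => ?_
    have hkn : k ≤ n := Nat.lt_succ_iff.mp (Finset.mem_range.mp hk)
    have hb0 : ENNReal.ofReal q ≠ 0 := by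
      simp [ENNReal.ofReal_eq_zero, not_le, hq]
    have hexp : l * (n : ℝ) + -(l * (k : ℝ)) = l * (((n - k : ℕ) : ℝ)) := by
      push_cast [hkn]
      ring
    rw [← mul_assoc, ← ENNReal.rpow_add _ _ hb0 ENNReal.ofReal_ne_top, hexp,
      ENNReal.rpow_mul, ENNReal.rpow_natCast, ENNReal.ofReal_rpow_of_pos hq]
  -- partial weight sums
  have hWle : ∀ n : ℕ, (∑ k ∈ Finset.range (n + 1), Q ^ (n - k)) ≤ C := by
    intro n
    have h1 : (∑ k ∈ Finset.range (n + 1), Q ^ (n - k))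
        = ∑ j ∈ Finset.range (n + 1), Q ^ j := by
      exact Finset.sum_range_reflect (fun j => Q ^ j) (n + 1)
    rw [h1, hCdef, ← ENNReal.tsum_geometric]
    exact ENNReal.sum_le_tsum _
  have hW0 : ∀ n : ℕ, (∑ k ∈ Finset.range (n + 1), Q ^ (n - k)) ≠ 0 := by
    intro n
    have : Q ^ (n - n) ≤ ∑ k ∈ Finset.range (n + 1), Q ^ (n - k) :=
      Finset.single_le_sum (f := fun k => Q ^ (n - k)) (fun i _ => zero_le)
        (Finset.self_mem_range_succ n)
    simp only [Nat.sub_self, pow_zero] at this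
    exact fun h => by simp [h] at this
  have hWt : ∀ n : ℕ, (∑ k ∈ Finset.range (n + 1), Q ^ (n - k)) ≠ ∞ :=
    fun n => ((hWle n).trans_lt (lt_top_iff_ne_top.mpr hCt)).ne
  -- Jensen step
  have hstep : ∀ n : ℕ, (∑ k ∈ Finset.range (n + 1), Q ^ (n - k) * a k) ^ p
      ≤ C ^ (p - 1) * ∑ k ∈ Finset.range (n + 1), Q ^ (n - k) * a k ^ p := by
    intro n
    refine (jensen_finset (Finset.range (n + 1)) (fun k => Q ^ (n - k)) a hp.le
      (hW0 n) (hWt n)).trans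
      (mul_le_mul' (ENNReal.rpow_le_rpow (hWle n) (by linarith)) le_rfl)
  -- swap sums
  have hswap : ∑' n : ℕ, ∑ k ∈ Finset.range (n + 1), Q ^ (n - k) * a k ^ p
      = C * ∑' k : ℕ, a k ^ p := by
    have h1 : ∀ n : ℕ, ∑ k ∈ Finset.range (n + 1), Q ^ (n - k) * a k ^ p
        = ∑' k : ℕ, (if k ≤ n then Q ^ (n - k) * a k ^ p else 0) := by
      intro n
      rw [tsum_eq_sum (s := Finset.range (n + 1))]
      · exact Finset.sum_congr rfl fun k hk => by
          simp [Nat.lt_succ_iff.mp (Finset.mem_range.mp hk)]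
      · intro k hk
        have hkn : ¬ k ≤ n := fun h => hk (Finset.mem_range.mpr (Nat.lt_succ_of_le h))
        simp [hkn]
    calc ∑' n : ℕ, ∑ k ∈ Finset.range (n + 1), Q ^ (n - k) * a k ^ p
        = ∑' n : ℕ, ∑' k : ℕ, (if k ≤ n then Q ^ (n - k) * a k ^ p else 0) := by
          exact tsum_congr h1
      _ = ∑' k : ℕ, ∑' n : ℕ, (if k ≤ n then Q ^ (n - k) * a k ^ p else 0) :=
          ENNReal.tsum_comm
      _ = ∑' k : ℕ, ∑' j : ℕ, Q ^ j * a k ^ p := by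
          refine tsum_congr fun k => ?_
          have hinj : Function.Injective (fun j : ℕ => j + k) :=
            fun x y h => by simpa using h
          have := hinj.tsum_eq
            (f := fun n => if k ≤ n then Q ^ (n - k) * a k ^ p else 0) ?_
          · rw [← this]
            refine tsum_congr fun j => ?_
            simp [Nat.le_add_left]
          · intro n hn
            simp only [Function.mem_support, ne_eq, ite_eq_right_iff, not_forall] at hn
            exact ⟨n - k, by simpa using Nat.sub_add_cancel hn.1⟩
      _ = ∑' k : ℕ, C * a k ^ p := by
          refine tsum_congr fun k => ?_
          rw [ENNReal.tsum_mul_right, hCdef, ENNReal.tsum_geometric]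
      _ = C * ∑' k : ℕ, a k ^ p := ENNReal.tsum_mul_left
  -- put together
  have hconst : C ^ (p - 1) * C = ENNReal.ofReal ((1 - q ^ l) ^ (-p)) := by
    have h1 : C ^ (p - 1) * C = C ^ p := by
      have h2 : C ^ (p - 1) * C = C ^ (p - 1) * C ^ (1 : ℝ) := by
        rw [ENNReal.rpow_one]
      rw [h2, ← ENNReal.rpow_add _ _ hC0 hCt]
      norm_num
    rw [h1, hCdef, hsub, ← ENNReal.rpow_neg_one, ← ENNReal.rpow_mul,
      ENNReal.ofReal_rpow_of_pos (by linarith)]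
    norm_num
  calc ∑' n : ℕ, ((ENNReal.ofReal q) ^ (l * (n : ℝ)) *
        ∑ k ∈ Finset.range (n + 1), (ENNReal.ofReal q) ^ (-(l * (k : ℝ))) * a k) ^ p
      = ∑' n : ℕ, (∑ k ∈ Finset.range (n + 1), Q ^ (n - k) * a k) ^ p := by
        exact tsum_congr fun n => by rw [hterm n]
    _ ≤ ∑' n : ℕ, C ^ (p - 1) * ∑ k ∈ Finset.range (n + 1), Q ^ (n - k) * a k ^ p :=
        ENNReal.tsum_le_tsum hstep
    _ = C ^ (p - 1) * ∑' n : ℕ, ∑ k ∈ Finset.range (n + 1), Q ^ (n - k) * a k ^ p :=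
        ENNReal.tsum_mul_left
    _ = C ^ (p - 1) * (C * ∑' k : ℕ, a k ^ p) := by rw [hswap]
    _ = ENNReal.ofReal ((1 - q ^ l) ^ (-p)) * ∑' n : ℕ, a n ^ p := by
        rw [← mul_assoc, hconst]
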